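/- arXiv:2301.01872 — 6 statements merged into one kernel-verified Lean document; each statement's English description precedes it below -/
import Mathlib

section
/- Let G be a finite nonabelian group such that [G,G] ≤ Z(G) and every proper quotient of G is abelian. Then [G,G] is cyclic of prime order. -/
open scoped commutatorElement

theorem stmt_1 {G : Type*} [Group G] [Finite G]
    (hna : ∃ a b : G, a * b ≠ b * a)
    (h3 : commutator G ≤ Subgroup.center G)
    (hq : ∀ (N : Subgroup G) [N.Normal], N ≠ ⊥ → ∀ a b : G ⧸ N, a * b = b * a) :
    IsCyclic ↥(commutator G) ∧ (Nat.card ↥(commutator G)).Prime := by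
  -- commutator is nontrivial
  obtain ⟨a, b, hab⟩ := hna
  have hne : commutator G ≠ ⊥ := by
    intro h
    have hmem : ⁅a, b⁆ ∈ commutator G := by
      rw [commutator_def]
      exact Subgroup.commutator_mem_commutator (Subgroup.mem_top a) (Subgroup.mem_top b)
    rw [h, Subgroup.mem_bot, commutatorElement_def] at hmem
    apply hab
    calc a * b = (a * b * a⁻¹ * b⁻¹) * (b * a) := by group
    _ = b * a := by rw [hmem]; group
  -- card > 1
  haveI : Fintype ↥(commutator G) := Fintype.ofFinite _
  have hcard : 1 < Nat.card ↥(commutator G) :=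
    (Subgroup.one_lt_card_iff_ne_bot (H := commutator G)).mpr hne
  obtain ⟨p, hp, hpdvd⟩ := (Nat.card ↥(commutator G)).exists_prime_and_dvd (by omega)
  haveI : Fact p.Prime := ⟨hp⟩
  obtain ⟨x, hx⟩ := exists_prime_orderOf_dvd_card (G := ↥(commutator G)) p (by rwa [Fintype.card_eq_nat_card])
  set g : G := (x : G) with hg
  have hgord : orderOf g = p := by
    rw [hg, Subgroup.orderOf_coe, hx]
  have hg1 : g ≠ 1 := by
    intro h
    rw [h, orderOf_one] at hgord
    exact hp.one_lt.ne' hgord.symm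
  -- zpowers g is normal
  have hgcent : g ∈ Subgroup.center G := h3 x.2
  have hnorm : (Subgroup.zpowers g).Normal := by
    constructor
    intro n hn c
    have : c * n = n * c := Subgroup.mem_center_iff.mp
      ((Subgroup.zpowers_le.mpr hgcent) hn) c
    rw [this]
    simpa using hn
  have hzne : Subgroup.zpowers g ≠ ⊥ := by
    intro h
    exact hg1 (by simpa [h, Subgroup.mem_bot] using Subgroup.mem_zpowers g)
  -- commutator ≤ zpowers g
  have hle : commutator G ≤ Subgroup.zpowers g := by
    rw [commutator_def, Subgroup.commutator_le]
    intro c _ d _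
    have := hq (Subgroup.zpowers g) hzne (↑c) (↑d)
    have h1 : ((⁅c, d⁆ : G) : G ⧸ Subgroup.zpowers g) = 1 := by
      have : ((c : G ⧸ Subgroup.zpowers g)) * d = d * c := this
      rw [commutatorElement_def]
      simp only [QuotientGroup.mk_mul, QuotientGroup.mk_inv]
      rw [mul_inv_eq_one, this, mul_inv_cancel_right]
    exact (QuotientGroup.eq_one_iff _).mp h1
  have heq : commutator G = Subgroup.zpowers g :=
    le_antisymm hle (Subgroup.zpowers_le.mpr x.2)
  have hcardp : Nat.card ↥(commutator G) = p := by
    rw [heq, Nat.card_zpowers, hgord]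
  refine ⟨?_, hcardp ▸ hp⟩
  have := hcardp ▸ hp
  exact isCyclic_of_prime_card hcardp
end

section
/- Let G be a finite nonabelian group such that [G,G] ≤ Z(G) and every proper quotient of G is abelian. Then the center Z(G) is cyclic of prime power order, for the same prime p such that [G,G] has order p. -/
theorem stmt_2 {G : Type*} [Group G] [Finite G]
    (hna : ∃ a b : G, a * b ≠ b * a)
    (h3 : commutator G ≤ Subgroup.center G)
    (hq : ∀ (N : Subgroup G) [N.Normal], N ≠ ⊥ → ∀ a b : G ⧸ N, a * b = b * a)
    (p : ℕ) (hp : p.Prime) (hcard : Nat.card ↥(commutator G) = p) :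
    IsCyclic ↥(Subgroup.center G) ∧ ∃ j : ℕ, Nat.card ↥(Subgroup.center G) = p ^ j := by
  classical
  haveI : Fact p.Prime := ⟨hp⟩
  set Z := Subgroup.center G with hZ
  -- every nontrivial subgroup contained in the center contains the commutator subgroup
  have M : ∀ N : Subgroup G, N ≤ Z → N ≠ ⊥ → commutator G ≤ N := by
    intro N hle hbot
    haveI hN : N.Normal := by
      constructor
      intro n hn g
      have hcen : g * n = n * g := (Subgroup.mem_center_iff.mp (hle hn) g)
      have : g * n * g⁻¹ = n := by rw [hcen, mul_inv_cancel_right]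
      rwa [this]
    have hcomm := hq N hbot
    rw [commutator_def, Subgroup.commutator_le]
    intro g _ h _
    rw [← QuotientGroup.eq_one_iff]
    open scoped commutatorElement in
    have : ((⁅g, h⁆ : G) : G ⧸ N) = ⁅(g : G ⧸ N), (h : G ⧸ N)⁆ :=
      map_commutatorElement (QuotientGroup.mk' N) g h
    rw [this, commutatorElement_eq_one_iff_mul_comm]
    exact hcomm _ _
  -- for every nontrivial central element, p divides its order, and elements of order p
  -- generate exactly the commutator subgroup
  have P : ∀ g : G, g ∈ Z → g ≠ 1 → commutator G ≤ Subgroup.zpowers g := by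
    intro g hg hg1
    exact M _ (Subgroup.zpowers_le.mpr hg) (by simpa [Subgroup.zpowers_eq_bot] using hg1)
  have Pdvd : ∀ g : G, g ∈ Z → g ≠ 1 → p ∣ orderOf g := by
    intro g hg hg1
    have := Subgroup.card_dvd_of_le (P g hg hg1)
    rwa [hcard, Nat.card_zpowers] at this
  -- elements of the center of order dividing p lie in the commutator subgroup
  have Pmem : ∀ g : G, g ∈ Z → g ^ p = 1 → g ∈ commutator G := by
    intro g hg hgp
    rcases eq_or_ne g 1 with rfl | hg1
    · exact Subgroup.one_mem _
    · have hord : orderOf g = p :=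
        Nat.dvd_antisymm (orderOf_dvd_of_pow_eq_one hgp) (Pdvd g hg hg1)
      have hle : commutator G ≤ Subgroup.zpowers g := P g hg hg1
      have hcards : Nat.card (Subgroup.zpowers g) ≤ Nat.card (commutator G) := by
        rw [hcard, Nat.card_zpowers, hord]
      have : commutator G = Subgroup.zpowers g :=
        Subgroup.eq_of_le_of_card_ge hle hcards
      rw [this]
      exact Subgroup.mem_zpowers g
  -- the center is a p-group
  have hZpos : Nat.card Z ≠ 0 := Nat.card_pos.ne'
  have Q : ∀ {q : ℕ}, q.Prime → q ∣ Nat.card Z → q = p := by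
    intro q hq' hdvd
    haveI : Fact q.Prime := ⟨hq'⟩
    obtain ⟨z, hz⟩ := exists_prime_orderOf_dvd_card' (G := Z) q hdvd
    have hz1 : (z : G) ≠ 1 := by
      intro h
      have : z = 1 := Subtype.ext h
      rw [this, orderOf_one] at hz
      exact hq'.one_lt.ne' hz.symm
    have hoz : orderOf (z : G) = q := by
      rw [← hz]
      exact (orderOf_injective Z.subtype Z.subtype_injective z).symm ▸ rfl
    have := Pdvd (z : G) z.2 hz1
    rw [hoz] at this
    exact ((Nat.prime_dvd_prime_iff_eq hp hq').mp this).symm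
  have hcardZ : Nat.card Z = p ^ (Nat.card Z).primeFactorsList.length :=
    Nat.eq_prime_pow_of_unique_prime_dvd hZpos fun hd hdvd => Q hd hdvd
  set k := (Nat.card Z).primeFactorsList.length with hk
  -- now prove cyclicity
  haveI : Fintype Z := Fintype.ofFinite Z
  haveI : Fintype (commutator G) := Fintype.ofFinite _
  -- the p-torsion of the center has at most p elements
  have hE : (Finset.univ.filter (fun y : Z => y ^ p = 1)).card ≤ p := by
    have hmaps : ∀ y ∈ Finset.univ.filter (fun y : Z => y ^ p = 1),
        (if h : (y : G) ∈ commutator G then (⟨(y : G), h⟩ : commutator G)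
          else ⟨1, Subgroup.one_mem _⟩) ∈ (Finset.univ : Finset (commutator G)) := by
      intro y _; exact Finset.mem_univ _
    have hinj : ∀ y ∈ Finset.univ.filter (fun y : Z => y ^ p = 1),
        ∀ y' ∈ Finset.univ.filter (fun y : Z => y ^ p = 1),
        (if h : (y : G) ∈ commutator G then (⟨(y : G), h⟩ : commutator G)
          else ⟨1, Subgroup.one_mem _⟩) =
        (if h : (y' : G) ∈ commutator G then (⟨(y' : G), h⟩ : commutator G)
          else ⟨1, Subgroup.one_mem _⟩) → y = y' := by
      intro y hy y' hy' heq
      rw [Finset.mem_filter] at hy hy'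
      have hyC : (y : G) ∈ commutator G := by
        apply Pmem _ y.2
        have := hy.2
        exact_mod_cast congrArg (Subtype.val) this
      have hy'C : (y' : G) ∈ commutator G := by
        apply Pmem _ y'.2
        have := hy'.2
        exact_mod_cast congrArg (Subtype.val) this
      rw [dif_pos hyC, dif_pos hy'C] at heq
      have : (y : G) = (y' : G) := congrArg (fun t : commutator G => (t : G)) heq
      exact Subtype.ext this
    calc (Finset.univ.filter (fun y : Z => y ^ p = 1)).card
        ≤ (Finset.univ : Finset (commutator G)).card :=
          Finset.card_le_card_of_injOn _ hmaps hinj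
      _ = Nat.card (commutator G) := by
          rw [Nat.card_eq_fintype_card, Finset.card_univ]
      _ = p := hcard
  -- order p^j torsion has at most p^j elements, by induction
  have Tle : ∀ j : ℕ, (Finset.univ.filter (fun a : Z => a ^ p ^ j = 1)).card ≤ p ^ j := by
    intro j
    induction j with
    | zero =>
      simp only [pow_zero, pow_one]
      calc (Finset.univ.filter (fun a : Z => a = 1)).card
          ≤ ({1} : Finset Z).card := Finset.card_le_card (by
            intro a ha
            rw [Finset.mem_filter] at ha
            simp [ha.2])
        _ = 1 := Finset.card_singleton _
    | succ j ih =>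
      set S := Finset.univ.filter (fun a : Z => a ^ p ^ (j + 1) = 1) with hS
      have key : S.card ≤ p * (S.image (fun a : Z => a ^ p)).card := by
        apply Finset.card_le_mul_card_image
        intro b hb
        obtain ⟨x₀, hx₀S, hx₀⟩ := Finset.mem_image.mp hb
        calc (S.filter (fun x : Z => x ^ p = b)).card
            ≤ (Finset.univ.filter (fun y : Z => y ^ p = 1)).card := by
              apply Finset.card_le_card_of_injOn (fun x => x₀⁻¹ * x)
              · intro x hx
                rw [Finset.mem_coe, Finset.mem_filter] at hx ⊢
                refine ⟨Finset.mem_univ _, ?_⟩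
                beta_reduce
                rw [(show Commute x₀⁻¹ x from Subtype.ext (Subgroup.mem_center_iff.mp (x₀⁻¹).2 (x : G)).symm).mul_pow, hx.2, ← hx₀, inv_pow, inv_mul_cancel]
              · intro x _ x' _ h
                exact mul_left_cancel h
          _ ≤ p := hE
      have himg : (S.image (fun a : Z => a ^ p)) ⊆
          Finset.univ.filter (fun a : Z => a ^ p ^ j = 1) := by
        intro b hb
        obtain ⟨x, hxS, rfl⟩ := Finset.mem_image.mp hb
        rw [Finset.mem_filter] at hxS ⊢
        refine ⟨Finset.mem_univ _, ?_⟩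
        rw [← pow_mul, ← pow_succ']
        exact hxS.2
      calc S.card ≤ p * (S.image (fun a : Z => a ^ p)).card := key
        _ ≤ p * p ^ j := by
            exact Nat.mul_le_mul_left p (le_trans (Finset.card_le_card himg) ih)
        _ = p ^ (j + 1) := by ring
  have hcyc : IsCyclic Z := by
    apply isCyclic_of_card_pow_eq_one_le
    intro n hn
    -- reduce to gcd with p ^ k
    have hdvd : Nat.gcd n (Nat.card Z) ∣ p ^ k := by
      rw [← hcardZ]; exact Nat.gcd_dvd_right n (Nat.card Z)
    obtain ⟨j, hjk, hj⟩ := (Nat.dvd_prime_pow hp).mp hdvd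
    have hsub : Finset.univ.filter (fun a : Z => a ^ n = 1) ⊆
        Finset.univ.filter (fun a : Z => a ^ p ^ j = 1) := by
      intro a ha
      rw [Finset.mem_filter] at ha ⊢
      refine ⟨Finset.mem_univ _, ?_⟩
      rw [← hj]
      apply orderOf_dvd_iff_pow_eq_one.mp
      exact Nat.dvd_gcd (orderOf_dvd_of_pow_eq_one ha.2)
        (orderOf_dvd_of_pow_eq_one pow_card_eq_one')
    calc (Finset.univ.filter (fun a : Z => a ^ n = 1)).card
        ≤ (Finset.univ.filter (fun a : Z => a ^ p ^ j = 1)).card :=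
          Finset.card_le_card hsub
      _ ≤ p ^ j := Tle j
      _ = Nat.gcd n (Nat.card Z) := hj.symm
      _ ≤ n := Nat.le_of_dvd hn (Nat.gcd_dvd_left _ _)
  exact ⟨hcyc, k, hcardZ⟩
end

section
/- Let G be a finite nonabelian group such that [G,G] ≤ Z(G) and every proper quotient of G is abelian, and let p be the order of [G,G] (a prime). Then G/Z(G) has exponent p, i.e. x^p ∈ Z(G) for all x ∈ G. -/
theorem stmt_3 {G : Type*} [Group G] [Finite G]
    (hna : ∃ a b : G, a * b ≠ b * a)
    (h3 : commutator G ≤ Subgroup.center G)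
    (hq : ∀ (N : Subgroup G) [N.Normal], N ≠ ⊥ → ∀ a b : G ⧸ N, a * b = b * a)
    (p : ℕ) (hp : p.Prime) (hcard : Nat.card ↥(commutator G) = p) :
    ∀ x : G, x ^ p ∈ Subgroup.center G := by
  intro x
  rw [Subgroup.mem_center_iff]
  intro g
  open scoped commutatorElement in
  set c : G := ⁅x, g⁆ with hc
  have hmem : c ∈ commutator G := Subgroup.commutator_mem_commutator
    (Subgroup.mem_top x) (Subgroup.mem_top g)
  have hcen : ∀ z : G, z * c = c * z := fun z =>
    (Subgroup.mem_center_iff.mp (h3 hmem) z)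
  have hcp : c ^ p = 1 := by
    have : (⟨c, hmem⟩ : commutator G) ^ p = 1 := by
      rw [← hcard]; exact pow_card_eq_one'
    simpa using congrArg Subtype.val this
  have hxg : x * g = c * (g * x) := by
    have : c = x * g * x⁻¹ * g⁻¹ := rfl
    rw [this]; group
  have key : ∀ n : ℕ, x ^ n * g = c ^ n * (g * x ^ n) := by
    intro n
    induction n with
    | zero => simp
    | succ n ih =>
      calc x ^ (n + 1) * g = x * (x ^ n * g) := by rw [pow_succ']; group
        _ = x * (c ^ n * (g * x ^ n)) := by rw [ih]
        _ = c ^ n * (x * g) * x ^ n := by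
            have hcn : x * c ^ n = c ^ n * x := (Commute.pow_right (hcen x) n).eq
            rw [← mul_assoc, hcn]; group
        _ = c ^ n * (c * (g * x)) * x ^ n := by rw [hxg]
        _ = c ^ (n + 1) * (g * x ^ (n + 1)) := by rw [pow_succ, pow_succ']; group
  rw [key p, hcp, one_mul]
end

section
/- Let p be a prime, j ≥ 1, and define N(p^j) by the presentation ⟨z, a, b | [z,a]=[z,b]=1, [a,b]=z^{p^{j-1}}, z^{p^j}=1, a^p=b^p=z⟩. Then N(p^j) contains an element of order p^{j+1}. -/
inductive NGen | z | a | b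

open FreeGroup commutatorElement in
def Nrels (p j : ℕ) : Set (FreeGroup NGen) :=
  { ⁅of NGen.z, of NGen.a⁆, ⁅of NGen.z, of NGen.b⁆,
    ⁅of NGen.a, of NGen.b⁆ * (of NGen.z ^ (p ^ (j - 1)))⁻¹,
    of NGen.z ^ (p ^ j),
    of NGen.a ^ p * (of NGen.z)⁻¹, of NGen.b ^ p * (of NGen.z)⁻¹ }

/-- The group N(p^j). -/
abbrev Ngroup (p j : ℕ) := PresentedGroup (Nrels p j)

section Model

variable {n p : ℕ}

/-- Auxiliary group: `ZMod n ⋊ ZMod p` where the generator of `ZMod p` acts on `ZMod n`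
by multiplication by `w`, with `w ^ p = 1`. -/
structure Mdl (n p : ℕ) (w : ZMod n) (hw : w ^ p = 1) where
  c : ZMod n
  s : ZMod p

namespace Mdl

variable {w : ZMod n}

lemma wpow_mod (hw : w ^ p = 1) (m : ℕ) : w ^ (m % p) = w ^ m := by
  conv_rhs => rw [← Nat.div_add_mod m p]
  rw [pow_add, pow_mul, hw, one_pow, one_mul]

lemma wpow_val_add [NeZero p] (hw : w ^ p = 1) (s t : ZMod p) :
    w ^ (s + t).val = w ^ s.val * w ^ t.val := by
  rw [ZMod.val_add, wpow_mod hw, pow_add]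

variable {hw : w ^ p = 1}

instance : Mul (Mdl n p w hw) := ⟨fun x y => ⟨x.c + w ^ x.s.val * y.c, x.s + y.s⟩⟩
instance : One (Mdl n p w hw) := ⟨⟨0, 0⟩⟩
instance : Inv (Mdl n p w hw) := ⟨fun x => ⟨-(w ^ (-x.s).val * x.c), -x.s⟩⟩

lemma mul_def (x y : Mdl n p w hw) :
    x * y = ⟨x.c + w ^ x.s.val * y.c, x.s + y.s⟩ := rfl

lemma one_def : (1 : Mdl n p w hw) = ⟨0, 0⟩ := rfl

lemma inv_def (x : Mdl n p w hw) : x⁻¹ = ⟨-(w ^ (-x.s).val * x.c), -x.s⟩ := rfl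

variable [NeZero p]

instance : Group (Mdl n p w hw) where
  mul_assoc x y z := by
    rw [mul_def, mul_def, mul_def, mul_def]
    refine congrArg₂ Mdl.mk ?_ (add_assoc _ _ _)
    show (x.c + w ^ x.s.val * y.c) + w ^ (x.s + y.s).val * z.c
        = x.c + w ^ x.s.val * (y.c + w ^ y.s.val * z.c)
    rw [wpow_val_add hw]
    ring
  one_mul x := by
    rw [one_def, mul_def]
    show (⟨0 + w ^ (0 : ZMod p).val * x.c, 0 + x.s⟩ : Mdl n p w hw) = x
    rw [ZMod.val_zero, pow_zero, one_mul, zero_add, zero_add]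
  mul_one x := by
    rw [mul_def]
    show (⟨x.c + w ^ x.s.val * 0, x.s + 0⟩ : Mdl n p w hw) = x
    rw [mul_zero, add_zero, add_zero]
  inv_mul_cancel x := by
    rw [inv_def, mul_def, one_def]
    refine congrArg₂ Mdl.mk ?_ (neg_add_cancel _)
    show -(w ^ (-x.s).val * x.c) + w ^ (-x.s).val * x.c = 0
    ring

omit [NeZero p] in
lemma mk_eq_one_iff {c : ZMod n} {s : ZMod p} :
    (⟨c, s⟩ : Mdl n p w hw) = 1 ↔ c = 0 ∧ s = 0 := by
  rw [one_def, Mdl.mk.injEq]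

lemma pow_central (x : ZMod n) (k : ℕ) :
    (⟨x, 0⟩ : Mdl n p w hw) ^ k = ⟨(k : ZMod n) * x, 0⟩ := by
  induction k with
  | zero => simp [one_def]
  | succ k ih =>
      rw [pow_succ, ih, mul_def]
      refine congrArg₂ Mdl.mk ?_ (add_zero 0)
      rw [ZMod.val_zero, pow_zero, one_mul]
      push_cast
      ring

lemma pow_B (t : ZMod n) (k : ℕ) (hw' : w ^ p = 1) :
    (⟨t, 1⟩ : Mdl n p w hw) ^ k
      = ⟨(∑ i ∈ Finset.range k, w ^ i) * t, (k : ZMod p)⟩ := by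
  induction k with
  | zero => simp [one_def]
  | succ k ih =>
      rw [pow_succ, ih, mul_def]
      refine congrArg₂ Mdl.mk ?_ (by push_cast; ring)
      show (∑ i ∈ Finset.range k, w ^ i) * t + w ^ ((k : ZMod p)).val * t = _
      rw [ZMod.val_natCast, wpow_mod hw', Finset.sum_range_succ]
      ring

end Mdl

end Model

open FreeGroup in
/-- If the relations of `N(p^j)` hold in some group `H` with the image of `a`
having order `p^(j+1)`, then `a` itself has order `p^(j+1)` in `N(p^j)`. -/
lemma Nkey (p j : ℕ) {H : Type} [Group H] (f : NGen → H)
    (h : ∀ r ∈ Nrels p j, FreeGroup.lift f r = 1)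
    (hord : orderOf (f NGen.a) = p ^ (j + 1)) :
    ∃ x : Ngroup p j, orderOf x = p ^ (j + 1) := by
  refine ⟨PresentedGroup.of NGen.a, ?_⟩
  have hrel : ∀ r ∈ Nrels p j, PresentedGroup.mk (Nrels p j) r = 1 := fun r hr =>
    (QuotientGroup.eq_one_iff r).2 (Subgroup.subset_normalClosure hr)
  have hofz : ∀ x : NGen, PresentedGroup.mk (Nrels p j) (FreeGroup.of x)
      = PresentedGroup.of (rels := Nrels p j) x := fun _ => rfl
  have h5 : (PresentedGroup.of (rels := Nrels p j) NGen.a) ^ p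
      = PresentedGroup.of NGen.z := by
    have := hrel (of NGen.a ^ p * (of NGen.z)⁻¹) (by simp [Nrels])
    rw [_root_.map_mul, _root_.map_pow, _root_.map_inv, mul_inv_eq_one, hofz, hofz] at this
    exact this
  have h4 : (PresentedGroup.of (rels := Nrels p j) NGen.z) ^ (p ^ j) = 1 := by
    have := hrel (of NGen.z ^ (p ^ j)) (by simp [Nrels])
    rwa [_root_.map_pow, hofz] at this
  have h1 : (PresentedGroup.of (rels := Nrels p j) NGen.a) ^ (p ^ (j + 1)) = 1 := by
    rw [pow_succ' p j, pow_mul, h5, h4]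
  refine Nat.dvd_antisymm (orderOf_dvd_of_pow_eq_one h1) ?_
  calc p ^ (j + 1)
      = orderOf ((PresentedGroup.toGroup h) (PresentedGroup.of NGen.a)) := by
        rw [PresentedGroup.toGroup.of, hord]
    _ ∣ _ := orderOf_map_dvd _ _

theorem stmt_10 (p j : ℕ) (hp : p.Prime) (hj : 1 ≤ j) :
    ∃ x : Ngroup p j, orderOf x = p ^ (j + 1) := by
  haveI : Fact p.Prime := ⟨hp⟩
  haveI : NeZero p := ⟨hp.ne_zero⟩
  by_cases hQ : p = 2 ∧ j = 1
  · obtain ⟨hp2, hj1⟩ := hQ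
    subst hp2 hj1
    refine Nkey 2 1 (fun g => (match g with
      | .z => QuaternionGroup.a 2
      | .a => QuaternionGroup.a 1
      | .b => QuaternionGroup.xa 0 : QuaternionGroup 2)) ?_ ?_
    · intro r hr
      simp only [Nrels, Set.mem_insert_iff, Set.mem_singleton_iff] at hr
      rcases hr with rfl | rfl | rfl | rfl | rfl | rfl <;>
        · simp only [map_mul, map_pow, map_inv, commutatorElement_def, FreeGroup.lift_apply_of]
          decide
    · show orderOf (QuaternionGroup.a 1 : QuaternionGroup 2) = 2 ^ (1 + 1)
      rw [QuaternionGroup.orderOf_a_one]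
      norm_num
  · -- main case: p odd, or p = 2 and j ≥ 2
    set n := p ^ (j + 1) with hn
    haveI : NeZero n := ⟨pow_ne_zero _ hp.ne_zero⟩
    haveI : Fact (1 < p) := ⟨hp.one_lt⟩
    set q : ZMod n := (p : ZMod n) ^ j with hqdef
    have hq0 : (p : ZMod n) ^ (j + 1) = 0 := by
      rw [← Nat.cast_pow, ← hn, ZMod.natCast_self]
    have hq2 : q * q = 0 := by
      rw [hqdef, ← pow_add, show j + j = (j + 1) + (j - 1) by omega, pow_add, hq0, zero_mul]
    have hpq : (p : ZMod n) * q = 0 := by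
      rw [hqdef, ← pow_succ' (p : ZMod n) j]
      exact hq0
    set w : ZMod n := 1 - q with hwdef
    have hwp : w ^ p = 1 := by
      have hw' : w = -q + 1 := by rw [hwdef]; ring
      rw [hw', add_pow]
      rw [← Finset.sum_subset (Finset.range_subset_range.2 (by have := hp.two_le; omega : 2 ≤ p + 1))
        (fun k hk hk2 => ?_)]
      · rw [Finset.sum_range_succ, Finset.sum_range_one]
        simp only [pow_zero, one_mul, Nat.choose_zero_right, Nat.cast_one, mul_one, pow_one,
          Nat.choose_one_right]
        linear_combination (-1 : ZMod n) * hpq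
      · have h2k : 2 ≤ k := by
          simp only [Finset.mem_range] at hk2; omega
        have : (-q) ^ k = 0 := by
          apply pow_eq_zero_of_le h2k
          rw [pow_two]
          linear_combination hq2
        rw [this, zero_mul, zero_mul]
    have hwi : ∀ i : ℕ, w ^ i = 1 - (i : ZMod n) * q := by
      intro i
      induction i with
      | zero => simp
      | succ i ih =>
          rw [pow_succ, ih, hwdef]
          push_cast
          linear_combination (i : ZMod n) * hq2
    have hS : (∑ i ∈ Finset.range p, w ^ i)
        = (p : ZMod n) - (∑ i ∈ Finset.range p, (i : ZMod n)) * q := by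
      rw [Finset.sum_congr rfl fun i _ => hwi i, Finset.sum_sub_distrib, Finset.sum_const,
        Finset.card_range, nsmul_eq_mul, mul_one, Finset.sum_mul]
    obtain ⟨t, ht⟩ : ∃ t : ZMod n, (∑ i ∈ Finset.range p, w ^ i) * t = (p : ZMod n) := by
      rcases hp.eq_two_or_odd' with hp2 | hodd
      · -- p = 2, j ≥ 2
        have hj2 : 2 ≤ j := by
          rcases Nat.lt_or_ge j 2 with h | h
          · exact absurd ⟨hp2, by omega⟩ hQ
          · exact h
        subst hp2
        have hq0' : (2 : ZMod n) ^ (j + 1) = 0 := by push_cast at hq0; exact hq0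
        have hqn : q = (2 : ZMod n) ^ j := by rw [hqdef]; norm_cast
        have hqx : q = 2 * (2 : ZMod n) ^ (j - 1) := by
          rw [hqn, ← pow_succ' (2 : ZMod n) (j - 1), show j - 1 + 1 = j by omega]
        have hx3 : (2 : ZMod n) * ((2 : ZMod n) ^ (j - 1) *
            ((2 : ZMod n) ^ (j - 1) * (2 : ZMod n) ^ (j - 1))) = 0 := by
          have he : (2 : ZMod n) * ((2 : ZMod n) ^ (j - 1) *
              ((2 : ZMod n) ^ (j - 1) * (2 : ZMod n) ^ (j - 1)))
              = (2 : ZMod n) ^ (1 + (j - 1) + (j - 1) + (j - 1)) := by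
            rw [pow_add, pow_add, pow_add, pow_one]
            ring
          rw [he, show 1 + (j - 1) + (j - 1) + (j - 1) = (j + 1) + (2 * j - 3) by omega,
            pow_add, hq0', zero_mul]
        refine ⟨1 + (2 : ZMod n) ^ (j - 1) + (2 : ZMod n) ^ (j - 1) * (2 : ZMod n) ^ (j - 1), ?_⟩
        rw [show (2 : ℕ) = 1 + 1 by rfl, Finset.sum_range_succ, Finset.sum_range_one,
          pow_zero, pow_one, hwdef, hqx]
        push_cast
        linear_combination (-1 : ZMod n) * hx3
      · -- p odd
        obtain ⟨m, hm⟩ := hodd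
        refine ⟨1, ?_⟩
        rw [mul_one, hS]
        have hgauss : (∑ i ∈ Finset.range p, i) = p * m := by
          have h2 := Finset.sum_range_id_mul_two p
          rw [show p - 1 = 2 * m by omega] at h2
          have h3 : (∑ i ∈ Finset.range p, i) * 2 = (p * m) * 2 := by rw [h2]; ring
          exact Nat.eq_of_mul_eq_mul_right (by norm_num) h3
        have hcast : (∑ i ∈ Finset.range p, (i : ZMod n))
            = ((∑ i ∈ Finset.range p, i : ℕ) : ZMod n) := by
          rw [Nat.cast_sum]
        rw [hcast, hgauss]
        push_cast
        linear_combination (-(m : ZMod n)) * hpq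
    -- the model group
    have hval1 : (1 : ZMod p).val = 1 := ZMod.val_one p
    set A : Mdl n p w hwp := ⟨1, 0⟩ with hAdef
    set B : Mdl n p w hwp := ⟨t, 1⟩ with hBdef
    set Z : Mdl n p w hwp := ⟨(p : ZMod n), 0⟩ with hZdef
    have hApow : ∀ k : ℕ, A ^ k = ⟨(k : ZMod n), 0⟩ := by
      intro k; rw [hAdef, Mdl.pow_central, mul_one]
    have hZpow : ∀ k : ℕ, Z ^ k = ⟨(k : ZMod n) * (p : ZMod n), 0⟩ := by
      intro k; rw [hZdef, Mdl.pow_central]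
    have hAp : A ^ p = Z := by rw [hApow p, hZdef]
    have hBp : B ^ p = Z := by
      rw [hBdef, Mdl.pow_B t p hwp, ht, ZMod.natCast_self, hZdef]
    have hZpj : Z ^ (p ^ j) = 1 := by
      rw [hZpow, Mdl.mk_eq_one_iff]
      refine ⟨?_, rfl⟩
      push_cast
      rw [← pow_succ (p : ZMod n) j]
      exact hq0
    have hZA : Z * A = A * Z := by
      rw [hZdef, hAdef, Mdl.mul_def, Mdl.mul_def]
      refine congrArg₂ Mdl.mk ?_ rfl
      show (p : ZMod n) + w ^ (0 : ZMod p).val * 1 = 1 + w ^ (0 : ZMod p).val * (p : ZMod n)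
      rw [ZMod.val_zero, pow_zero]
      ring
    have hZB : Z * B = B * Z := by
      rw [hZdef, hBdef, Mdl.mul_def, Mdl.mul_def]
      refine congrArg₂ Mdl.mk ?_ (add_comm _ _)
      show (p : ZMod n) + w ^ (0 : ZMod p).val * t = t + w ^ (1 : ZMod p).val * (p : ZMod n)
      rw [ZMod.val_zero, pow_zero, hval1, pow_one, hwdef]
      linear_combination hpq
    open commutatorElement in
    have hcomm : ⁅A, B⁆ = ⟨q, 0⟩ := by
      have hAB : A * B = (⟨q, 0⟩ : Mdl n p w hwp) * (B * A) := by
        rw [hAdef, hBdef, Mdl.mul_def, Mdl.mul_def, Mdl.mul_def]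
        refine congrArg₂ Mdl.mk ?_ (by ring)
        show 1 + w ^ (0 : ZMod p).val * t
            = q + w ^ (0 : ZMod p).val * (t + w ^ (1 : ZMod p).val * 1)
        rw [ZMod.val_zero, pow_zero, hval1, pow_one, hwdef]
        ring
      calc ⁅A, B⁆ = (A * B) * (B * A)⁻¹ := by
            rw [commutatorElement_def, mul_inv_rev, mul_assoc]
        _ = (⟨q, 0⟩ : Mdl n p w hwp) * (B * A) * (B * A)⁻¹ := by rw [hAB]
        _ = ⟨q, 0⟩ := mul_inv_cancel_right _ _
    refine Nkey p j (fun g => match g with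
      | .z => Z | .a => A | .b => B) ?_ ?_
    · intro r hr
      simp only [Nrels, Set.mem_insert_iff, Set.mem_singleton_iff] at hr
      rcases hr with rfl | rfl | rfl | rfl | rfl | rfl <;>
          simp only [map_mul, map_pow, map_inv, map_commutatorElement, FreeGroup.lift_apply_of]
      · exact commutatorElement_eq_one_iff_mul_comm.2 hZA
      · exact commutatorElement_eq_one_iff_mul_comm.2 hZB
      · rw [mul_inv_eq_one, hcomm, hZpow]
        refine congrArg₂ Mdl.mk ?_ rfl
        push_cast
        rw [← pow_succ (p : ZMod n) (j - 1), show j - 1 + 1 = j by omega, hqdef]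
      · exact hZpj
      · rw [mul_inv_eq_one, hAp]
      · rw [mul_inv_eq_one, hBp]
    · show orderOf A = p ^ (j + 1)
      have hA1 : A ^ (p ^ (j + 1)) = 1 := by
        rw [hApow, Mdl.mk_eq_one_iff, ← hn]
        exact ⟨by rw [ZMod.natCast_self], rfl⟩
      have hdvd : ∀ m : ℕ, A ^ m = 1 → p ^ (j + 1) ∣ m := by
        intro m hm
        rw [hApow, Mdl.mk_eq_one_iff] at hm
        rw [← hn]
        exact (ZMod.natCast_eq_zero_iff m n).1 hm.1
      exact Nat.dvd_antisymm (orderOf_dvd_of_pow_eq_one hA1) (hdvd _ (pow_orderOf_eq_one A))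
end

section
/- Let p be a prime with p^j ≠ 2. The group M(p^j) defined by ⟨z, a, b | [z,a]=[z,b]=1, [a,b]=z^{p^{j-1}}, z^{p^j}=a^p=b^p=1⟩ has exponent dividing p^j, i.e. x^{p^j} = 1 for all x ∈ M(p^j). -/
inductive MGen | z | a | b

open FreeGroup commutatorElement in
def Mrels (p j : ℕ) : Set (FreeGroup MGen) :=
  { ⁅of MGen.z, of MGen.a⁆, ⁅of MGen.z, of MGen.b⁆,
    ⁅of MGen.a, of MGen.b⁆ * (of MGen.z ^ (p ^ (j - 1)))⁻¹,
    of MGen.z ^ (p ^ j), of MGen.a ^ p, of MGen.b ^ p }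

/-- The group M(p^j). -/
abbrev Mgroup (p j : ℕ) := PresentedGroup (Mrels p j)

namespace MAux

variable {G : Type*} [Group G] {Z A B : G} {q : ℕ}

/-- The normal form word `Z^i * A^m * B^n`. -/
def W (Z A B : G) (i m n : ℤ) : G := Z ^ i * A ^ m * B ^ n

lemma conj_zpow_eq (hZB : Commute Z B) (hBA : B * A * B⁻¹ = Z ^ (-(q : ℤ)) * A) :
    ∀ n : ℤ, B ^ n * A * B ^ (-n) = Z ^ (-(q : ℤ) * n) * A := by
  have hBA' : B⁻¹ * A * B = Z ^ ((q : ℤ)) * A := by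
    have h3 : A = Z ^ (-(q : ℤ)) * (B⁻¹ * A * B) := by
      calc A = B⁻¹ * (B * A * B⁻¹) * B := by group
        _ = B⁻¹ * (Z ^ (-(q : ℤ)) * A) * B := by rw [hBA]
        _ = Z ^ (-(q : ℤ)) * (B⁻¹ * A) * B := by
              rw [(hZB.zpow_left (-(q : ℤ))).symm.inv_left.left_comm]
        _ = Z ^ (-(q : ℤ)) * (B⁻¹ * A * B) := by rw [mul_assoc, mul_assoc]
    calc B⁻¹ * A * B = Z ^ ((q : ℤ)) * (Z ^ (-(q : ℤ)) * (B⁻¹ * A * B)) := by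
          rw [← mul_assoc, ← zpow_add]; norm_num
      _ = Z ^ ((q : ℤ)) * A := by rw [← h3]
  intro n
  induction n using Int.induction_on with
  | zero => simp
  | succ k ih =>
      calc B ^ ((k : ℤ) + 1) * A * B ^ (-((k : ℤ) + 1))
          = B * (B ^ (k : ℤ) * A * B ^ (-(k : ℤ))) * B⁻¹ := by group
        _ = B * (Z ^ (-(q : ℤ) * k) * A) * B⁻¹ := by rw [ih]
        _ = Z ^ (-(q : ℤ) * k) * (B * A) * B⁻¹ := by
              rw [(hZB.zpow_left (-(q : ℤ) * k)).symm.left_comm]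
        _ = Z ^ (-(q : ℤ) * k) * (B * A * B⁻¹) := by rw [mul_assoc, mul_assoc]
        _ = Z ^ (-(q : ℤ) * k) * (Z ^ (-(q : ℤ)) * A) := by rw [hBA]
        _ = Z ^ (-(q : ℤ) * ((k : ℤ) + 1)) * A := by
              rw [← mul_assoc, ← zpow_add,
                show -(q : ℤ) * k + -(q : ℤ) = -(q : ℤ) * ((k : ℤ) + 1) by ring]
  | pred k ih =>
      calc B ^ (-(k : ℤ) - 1) * A * B ^ (-(-(k : ℤ) - 1))
          = B⁻¹ * (B ^ (-(k : ℤ)) * A * B ^ (-(-(k : ℤ)))) * B := by group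
        _ = B⁻¹ * (Z ^ (-(q : ℤ) * (-(k : ℤ))) * A) * B := by rw [ih]
        _ = Z ^ (-(q : ℤ) * (-(k : ℤ))) * (B⁻¹ * A) * B := by
              rw [(hZB.zpow_left (-(q : ℤ) * (-(k : ℤ)))).symm.inv_left.left_comm]
        _ = Z ^ (-(q : ℤ) * (-(k : ℤ))) * (B⁻¹ * A * B) := by
              rw [mul_assoc, mul_assoc]
        _ = Z ^ (-(q : ℤ) * (-(k : ℤ))) * (Z ^ ((q : ℤ)) * A) := by rw [hBA']
        _ = Z ^ (-(q : ℤ) * (-(k : ℤ) - 1)) * A := by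
              rw [← mul_assoc, ← zpow_add,
                show -(q : ℤ) * (-(k : ℤ)) + (q : ℤ) = -(q : ℤ) * (-(k : ℤ) - 1) by ring]

lemma swap (hZA : Commute Z A) (hZB : Commute Z B)
    (hBA : B * A * B⁻¹ = Z ^ (-(q : ℤ)) * A) (n m : ℤ) :
    B ^ n * A ^ m = Z ^ (-((q : ℤ) * (n * m))) * (A ^ m * B ^ n) := by
  have h1 : B ^ n * A ^ m = (B ^ n * A * (B ^ n)⁻¹) ^ m * B ^ n := by
    rw [conj_zpow]; group
  rw [h1, show (B ^ n)⁻¹ = B ^ (-n) from (zpow_neg B n).symm, conj_zpow_eq hZB hBA n,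
    (hZA.zpow_left (-(q : ℤ) * n)).mul_zpow, ← zpow_mul, mul_assoc,
    show -(q : ℤ) * n * m = -((q : ℤ) * (n * m)) by ring]

lemma mul_W (hZA : Commute Z A) (hZB : Commute Z B)
    (hBA : B * A * B⁻¹ = Z ^ (-(q : ℤ)) * A) (i m n i' m' n' : ℤ) :
    W Z A B i m n * W Z A B i' m' n' =
      W Z A B (i + i' + -((q : ℤ) * (n * m'))) (m + m') (n + n') := by
  have hZB' : ∀ s t : ℤ, Commute (Z ^ s) (B ^ t) := fun s t => hZB.zpow_zpow s t
  have hZA' : ∀ s t : ℤ, Commute (Z ^ s) (A ^ t) := fun s t => hZA.zpow_zpow s t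
  have hswap : B ^ n * (A ^ m' * B ^ n') =
      Z ^ (-((q : ℤ) * (n * m'))) * (A ^ m' * (B ^ n * B ^ n')) := by
    rw [← mul_assoc, swap hZA hZB hBA n m', mul_assoc, mul_assoc]
  simp only [W, mul_assoc]
  rw [(hZB' i' n).symm.left_comm, (hZA' i' m).symm.left_comm, hswap,
    (hZA' (-((q : ℤ) * (n * m'))) m).symm.left_comm]
  simp only [zpow_add, mul_assoc]

lemma pow_W (hZA : Commute Z A) (hZB : Commute Z B)
    (hBA : B * A * B⁻¹ = Z ^ (-(q : ℤ)) * A) (i m n : ℤ) :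
    ∀ k : ℕ, (W Z A B i m n) ^ k =
      W Z A B (i * k - (q : ℤ) * (n * m) * (k.choose 2)) (m * k) (n * k) := by
  intro k
  induction k with
  | zero => simp [W]
  | succ k ih =>
      have hch : (((k + 1).choose 2 : ℕ) : ℤ) = ((k.choose 2 : ℕ) : ℤ) + (k : ℤ) := by
        rw [Nat.choose_succ_succ k 1]
        push_cast [Nat.choose_one_right]
        ring
      rw [pow_succ, ih, mul_W hZA hZB hBA,
        show m * (k : ℤ) + m = m * ((k + 1 : ℕ) : ℤ) by push_cast; ring,
        show n * (k : ℤ) + n = n * ((k + 1 : ℕ) : ℤ) by push_cast; ring,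
        show i * (k : ℤ) - (q : ℤ) * (n * m) * ((k.choose 2 : ℕ) : ℤ) + i +
            -((q : ℤ) * (n * (k : ℤ) * m)) =
            i * ((k + 1 : ℕ) : ℤ) - (q : ℤ) * (n * m) * (((k + 1).choose 2 : ℕ) : ℤ) by
          rw [hch]; push_cast; ring]

end MAux

open scoped commutatorElement

lemma dvd_aux (p j : ℕ) (hp : p.Prime) (hj : 1 ≤ j) (hne : p ^ j ≠ 2) :
    p ^ j ∣ p ^ (j - 1) * (p ^ j).choose 2 := by
  have hpos : 1 ≤ p ^ j := Nat.one_le_pow _ _ hp.pos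
  have h2 : 2 * ((p ^ j).choose 2) = p ^ j * (p ^ j - 1) := by
    rw [Nat.choose_two_right, Nat.mul_div_cancel']
    have := Nat.even_mul_succ_self (p ^ j - 1)
    rw [Nat.sub_add_cancel hpos] at this
    rw [mul_comm]
    exact this.two_dvd
  by_cases hp2 : p = 2
  · subst hp2
    have hj2 : 2 ≤ j := by
      by_contra h
      push_neg at h
      interval_cases j <;> simp_all
    have h3 : 2 ^ j = 2 * 2 ^ (j - 1) := by
      conv_lhs => rw [show j = 1 + (j - 1) by omega]
      rw [pow_add, pow_one]
    have hC : (2 ^ j).choose 2 = 2 ^ (j - 1) * (2 ^ j - 1) := by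
      refine Nat.eq_of_mul_eq_mul_left (by norm_num : 0 < 2) ?_
      rw [h2, ← mul_assoc, ← h3]
    rw [hC, ← mul_assoc]
    refine Dvd.dvd.mul_right ?_ _
    rw [← pow_add]
    exact pow_dvd_pow 2 (by omega)
  · have hco : Nat.Coprime (p ^ j) 2 :=
      ((Nat.coprime_primes hp Nat.prime_two).mpr hp2).pow_left j
    refine hco.dvd_of_dvd_mul_right ?_
    have heq : p ^ (j - 1) * (p ^ j).choose 2 * 2 = p ^ j * (p ^ (j - 1) * (p ^ j - 1)) := by
      rw [mul_assoc, mul_comm ((p ^ j).choose 2) 2, h2]; ring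
    rw [heq]
    exact dvd_mul_right _ _

theorem stmt_11 (p j : ℕ) (hp : p.Prime) (hj : 1 ≤ j) (hne : p ^ j ≠ 2) :
    ∀ x : Mgroup p j, x ^ (p ^ j) = 1 := by
  intro x
  have hone : ∀ r ∈ Mrels p j, PresentedGroup.mk (Mrels p j) r = 1 := fun r hr =>
    (QuotientGroup.eq_one_iff r).mpr (Subgroup.subset_normalClosure hr)
  set q : ℕ := p ^ (j - 1) with hq
  set Z : Mgroup p j := PresentedGroup.of MGen.z with hZdef
  set A : Mgroup p j := PresentedGroup.of MGen.a with hAdef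
  set B : Mgroup p j := PresentedGroup.of MGen.b with hBdef
  have hZA : Commute Z A := by
    have h := hone _ (show ⁅FreeGroup.of MGen.z, FreeGroup.of MGen.a⁆ ∈ Mrels p j by
      simp [Mrels])
    rw [map_commutatorElement] at h
    exact commutatorElement_eq_one_iff_commute.mp h
  have hZB : Commute Z B := by
    have h := hone _ (show ⁅FreeGroup.of MGen.z, FreeGroup.of MGen.b⁆ ∈ Mrels p j by
      simp [Mrels])
    rw [map_commutatorElement] at h
    exact commutatorElement_eq_one_iff_commute.mp h
  have hABel : ⁅A, B⁆ = Z ^ (q : ℕ) := by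
    have h := hone _ (show ⁅FreeGroup.of MGen.a, FreeGroup.of MGen.b⁆ *
        (FreeGroup.of MGen.z ^ (p ^ (j - 1)))⁻¹ ∈ Mrels p j by simp [Mrels])
    rw [map_mul, map_inv, map_pow, map_commutatorElement] at h
    exact mul_inv_eq_one.mp h
  have hBA : B * A * B⁻¹ = Z ^ (-(q : ℤ)) * A := by
    have h1 : B * A * B⁻¹ = (⁅A, B⁆)⁻¹ * A := by
      simp only [commutatorElement_def]; group
    rw [h1, hABel, ← zpow_natCast Z q, ← zpow_neg]
  have hZN : Z ^ (((p ^ j : ℕ)) : ℤ) = 1 := by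
    have h := hone _ (show FreeGroup.of MGen.z ^ (p ^ j) ∈ Mrels p j by simp [Mrels])
    rw [map_pow] at h
    rw [zpow_natCast]
    exact h
  have hAp : A ^ ((p : ℕ) : ℤ) = 1 := by
    have h := hone _ (show FreeGroup.of MGen.a ^ p ∈ Mrels p j by simp [Mrels])
    rw [map_pow] at h
    rw [zpow_natCast]
    exact h
  have hBp : B ^ ((p : ℕ) : ℤ) = 1 := by
    have h := hone _ (show FreeGroup.of MGen.b ^ p ∈ Mrels p j by simp [Mrels])
    rw [map_pow] at h
    rw [zpow_natCast]
    exact h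
  have hxmem : x ∈ Subgroup.closure (Set.range (PresentedGroup.of : MGen → Mgroup p j)) := by
    rw [PresentedGroup.closure_range_of]
    exact Subgroup.mem_top x
  have hnf : ∃ i m n : ℤ, x = MAux.W Z A B i m n := by
    refine Subgroup.closure_induction ?_ ?_ ?_ ?_ hxmem
    · rintro _ ⟨g, rfl⟩
      cases g
      · exact ⟨1, 0, 0, by simp [MAux.W, hZdef]⟩
      · exact ⟨0, 1, 0, by simp [MAux.W, hAdef]⟩
      · exact ⟨0, 0, 1, by simp [MAux.W, hBdef]⟩
    · exact ⟨0, 0, 0, by simp [MAux.W]⟩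
    · rintro x y - - ⟨i, m, n, rfl⟩ ⟨i', m', n', rfl⟩
      exact ⟨_, _, _, MAux.mul_W hZA hZB hBA i m n i' m' n'⟩
    · rintro x - ⟨i, m, n, rfl⟩
      refine ⟨-i + -(-((q : ℤ) * (n * (-m)))), -m, -n, ?_⟩
      refine (inv_eq_of_mul_eq_one_right ?_)
      rw [MAux.mul_W hZA hZB hBA,
        show i + (-i + -(-((q : ℤ) * (n * (-m))))) + -((q : ℤ) * (n * (-m))) = 0 by ring,
        show m + -m = (0 : ℤ) by ring, show n + -n = (0 : ℤ) by ring]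
      simp [MAux.W]
  obtain ⟨i, m, n, rfl⟩ := hnf
  rw [MAux.pow_W hZA hZB hBA]
  have hj' : p ^ j = p * p ^ (j - 1) := by
    conv_lhs => rw [show j = 1 + (j - 1) by omega]
    rw [pow_add, pow_one]
  have hA0 : A ^ (m * ((p ^ j : ℕ) : ℤ)) = 1 := by
    calc A ^ (m * ((p ^ j : ℕ) : ℤ)) = (A ^ ((p : ℕ) : ℤ)) ^ (m * ((p ^ (j - 1) : ℕ) : ℤ)) := by
          rw [← zpow_mul]; congr 1; push_cast [hj']; ring
      _ = 1 := by rw [hAp]; simp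
  have hB0 : B ^ (n * ((p ^ j : ℕ) : ℤ)) = 1 := by
    calc B ^ (n * ((p ^ j : ℕ) : ℤ)) = (B ^ ((p : ℕ) : ℤ)) ^ (n * ((p ^ (j - 1) : ℕ) : ℤ)) := by
          rw [← zpow_mul]; congr 1; push_cast [hj']; ring
      _ = 1 := by rw [hBp]; simp
  have hZ0 : Z ^ (i * ((p ^ j : ℕ) : ℤ) - (q : ℤ) * (n * m) * (((p ^ j).choose 2 : ℕ) : ℤ)) = 1 := by
    obtain ⟨t, ht⟩ := dvd_aux p j hp hj hne
    have ht' : (q : ℤ) * (((p ^ j).choose 2 : ℕ) : ℤ) = ((p ^ j : ℕ) : ℤ) * (t : ℤ) := by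
      rw [hq]; exact_mod_cast congrArg (Nat.cast : ℕ → ℤ) ht
    have hexp : i * ((p ^ j : ℕ) : ℤ) - (q : ℤ) * (n * m) * (((p ^ j).choose 2 : ℕ) : ℤ) =
        ((p ^ j : ℕ) : ℤ) * (i - (t : ℤ) * (n * m)) := by
      linear_combination (-(n * m)) * ht'
    rw [hexp, zpow_mul, hZN, one_zpow]
  simp only [MAux.W, hZ0, hA0, hB0, mul_one]
end

section
/- Let G be a finite group with generators σ, a_1, b_1, …, a_g, b_g (g ≥ 1) satisfying: σ commutes with every a_r and b_r; a_s, a_r, b_s, b_r pairwise commute for s ≠ r; and [a_r, b_r] = σ^2 for all r. Then the commutator subgroup of G is generated by σ^2 and is contained in the center of G; in particular if σ^2 ≠ 1 then G is 2-step nilpotent. -/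
open scoped commutatorElement

theorem stmt_13 {G : Type*} [Group G] [Finite G] (g : ℕ) (hg : 1 ≤ g)
    (σ : G) (a b : Fin g → G)
    (hgen : Subgroup.closure ({σ} ∪ Set.range a ∪ Set.range b) = ⊤)
    (hσa : ∀ r, Commute σ (a r)) (hσb : ∀ r, Commute σ (b r))
    (haa : ∀ r s, Commute (a r) (a s))
    (hbb : ∀ r s, Commute (b r) (b s))
    (hab : ∀ r s, r ≠ s → Commute (a r) (b s))
    (hrel : ∀ r, ⁅a r, b r⁆ = σ ^ 2) :
    commutator G = Subgroup.zpowers (σ ^ 2) ∧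
    commutator G ≤ Subgroup.center G ∧
    (σ ^ 2 ≠ 1 → commutator G ≠ ⊥ ∧ commutator G ≤ Subgroup.center G) := by
  -- σ is central
  have hσc : σ ∈ Subgroup.center G := by
    rw [Subgroup.mem_center_iff]
    intro x
    have hx : x ∈ Subgroup.closure ({σ} ∪ Set.range a ∪ Set.range b) := by
      rw [hgen]; trivial
    induction hx using Subgroup.closure_induction with
    | mem y hy =>
      rcases hy with (hy | ⟨r, rfl⟩) | ⟨r, rfl⟩
      · rw [Set.mem_singleton_iff] at hy; rw [hy]
      · exact (hσa r).symm
      · exact (hσb r).symm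
    | one => simp
    | mul y z _ _ hy hz => rw [mul_assoc, hz, ← mul_assoc, hy, mul_assoc]
    | inv y _ hy =>
      have := congrArg (fun t => y⁻¹ * t * y⁻¹) hy
      simpa [mul_assoc] using this.symm
  set N := Subgroup.zpowers (σ ^ 2) with hN
  have hNle : N ≤ Subgroup.center G := by
    rw [Subgroup.zpowers_le]
    exact pow_mem hσc 2
  -- every commutator lies in N
  have key : ∀ x y : G, ⁅x, y⁆ ∈ N := by
    intro x y
    have hx : x ∈ Subgroup.closure ({σ} ∪ Set.range a ∪ Set.range b) := by
      rw [hgen]; trivial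
    have hy : y ∈ Subgroup.closure ({σ} ∪ Set.range a ∪ Set.range b) := by
      rw [hgen]; trivial
    induction hx, hy using Subgroup.closure_induction₂ with
    | mem x y hx hy =>
      have hcσ : ∀ z : G, Commute σ z := fun z =>
        (Subgroup.mem_center_iff.mp hσc z).symm
      rcases hx with (hx | ⟨r, rfl⟩) | ⟨r, rfl⟩
      · rw [Set.mem_singleton_iff] at hx; subst hx
        rw [commutatorElement_eq_one_iff_commute.mpr (hcσ y)]; exact one_mem N
      · rcases hy with (hy | ⟨s, rfl⟩) | ⟨s, rfl⟩
        · rw [Set.mem_singleton_iff] at hy; subst hy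
          rw [commutatorElement_eq_one_iff_commute.mpr (hcσ (a r)).symm]
          exact one_mem N
        · rw [commutatorElement_eq_one_iff_commute.mpr (haa r s)]; exact one_mem N
        · by_cases h : r = s
          · subst h; rw [hrel r]; exact Subgroup.mem_zpowers _
          · rw [commutatorElement_eq_one_iff_commute.mpr (hab r s h)]; exact one_mem N
      · rcases hy with (hy | ⟨s, rfl⟩) | ⟨s, rfl⟩
        · rw [Set.mem_singleton_iff] at hy; subst hy
          rw [commutatorElement_eq_one_iff_commute.mpr (hcσ (b r)).symm]
          exact one_mem N
        · by_cases h : s = r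
          · subst h
            have : ⁅b s, a s⁆ = (σ ^ 2)⁻¹ := by rw [← hrel s, commutatorElement_inv]
            rw [this]; exact inv_mem (Subgroup.mem_zpowers _)
          · rw [commutatorElement_eq_one_iff_commute.mpr ((hab s r h).symm)]
            exact one_mem N
        · rw [commutatorElement_eq_one_iff_commute.mpr (hbb r s)]; exact one_mem N
    | one_left x hx => simpa using one_mem N
    | one_right x hx => simpa using one_mem N
    | mul_left x y z hx hy hz h1 h2 =>
      have hid : ⁅x * y, z⁆ = x * ⁅y, z⁆ * x⁻¹ * ⁅x, z⁆ := by group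
      have hc : x * ⁅y, z⁆ * x⁻¹ = ⁅y, z⁆ := by
        have := (Subgroup.mem_center_iff.mp (hNle h2) x⁻¹)
        rw [mul_assoc, ← this]; group
      rw [hid, hc]; exact mul_mem h2 h1
    | mul_right y z x hy hz hx h1 h2 =>
      have hid : ⁅x, y * z⁆ = ⁅x, y⁆ * (y * ⁅x, z⁆ * y⁻¹) := by group
      have hc : y * ⁅x, z⁆ * y⁻¹ = ⁅x, z⁆ := by
        have := (Subgroup.mem_center_iff.mp (hNle h2) y⁻¹)
        rw [mul_assoc, ← this]; group
      rw [hid, hc]; exact mul_mem h1 h2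
    | inv_left x y hx hy h =>
      have hid : ⁅x⁻¹, y⁆ = x⁻¹ * ⁅x, y⁆⁻¹ * x := by group
      have hc : x⁻¹ * ⁅x, y⁆⁻¹ * x = ⁅x, y⁆⁻¹ := by
        have := (Subgroup.mem_center_iff.mp (hNle (inv_mem h)) x)
        rw [mul_assoc, ← this]; group
      rw [hid, hc]; exact inv_mem h
    | inv_right x y hx hy h =>
      have hid : ⁅x, y⁻¹⁆ = y⁻¹ * ⁅x, y⁆⁻¹ * y := by group
      have hc : y⁻¹ * ⁅x, y⁆⁻¹ * y = ⁅x, y⁆⁻¹ := by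
        have := (Subgroup.mem_center_iff.mp (hNle (inv_mem h)) y)
        rw [mul_assoc, ← this]; group
      rw [hid, hc]; exact inv_mem h
  have hle : commutator G ≤ N := by
    rw [commutator_def, Subgroup.commutator_le]
    intro p _ q _
    exact key p q
  have hge : N ≤ commutator G := by
    rw [Subgroup.zpowers_le]
    rw [← hrel ⟨0, hg⟩]
    exact Subgroup.commutator_mem_commutator (Subgroup.mem_top _) (Subgroup.mem_top _)
  have heq : commutator G = N := le_antisymm hle hge
  refine ⟨heq, heq ▸ hNle, fun hne => ⟨?_, heq ▸ hNle⟩⟩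
  intro hbot
  apply hne
  have : σ ^ 2 ∈ commutator G := hge (Subgroup.mem_zpowers _)
  rw [hbot] at this
  exact Subgroup.mem_bot.mp this
end
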